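/- Context-free monoidal languages are closed under union: if L₁ and L₂ are context-free monoidal languages over C with start symbols of the same type ⟨X|Y⟩, then L₁ ∪ L₂ is a context-free monoidal language. -/

import Mathlib

open CategoryTheory

/-- A strict monoidal structure on a category whose objects form a monoid:
a tensor on morphisms that is functorial and strictly associative and unital. -/
class SMC (C : Type u) [Category.{v} C] [Monoid C] where
  tens : ∀ {W X Y Z : C}, (W ⟶ X) → (Y ⟶ Z) → (W * Y ⟶ X * Z)
  tens_id : ∀ (X Y : C), tens (𝟙 X) (𝟙 Y) = 𝟙 (X * Y)
  tens_comp : ∀ {X₁ X₂ X₃ Y₁ Y₂ Y₃ : C} (f₁ : X₁ ⟶ X₂) (f₂ : X₂ ⟶ X₃)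
      (g₁ : Y₁ ⟶ Y₂) (g₂ : Y₂ ⟶ Y₃),
      tens (f₁ ≫ f₂) (g₁ ≫ g₂) = tens f₁ g₁ ≫ tens f₂ g₂
  tens_assoc : ∀ {X X' Y Y' Z Z' : C} (f : X ⟶ X') (g : Y ⟶ Y') (h : Z ⟶ Z'),
      tens (tens f g) h =
        eqToHom (mul_assoc X Y Z) ≫ tens f (tens g h) ≫ eqToHom (mul_assoc X' Y' Z').symm
  tens_one_left : ∀ {X Y : C} (f : X ⟶ Y),
      tens (𝟙 (1 : C)) f = eqToHom (one_mul X) ≫ f ≫ eqToHom (one_mul Y).symm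
  tens_one_right : ∀ {X Y : C} (f : X ⟶ Y),
      tens f (𝟙 (1 : C)) = eqToHom (mul_one X) ≫ f ≫ eqToHom (mul_one Y).symm

/-- A raw optic over a strict monoidal category `C`, from the list of pairs `l` to the
pair `⟨X|T⟩`: a tuple of morphisms `f₀ : X ⟶ M₁*A₁*N₁`,
`fᵢ : Mᵢ*Bᵢ*Nᵢ ⟶ Mᵢ₊₁*Aᵢ₊₁*Nᵢ₊₁`, `fₙ : Mₙ*Bₙ*Nₙ ⟶ T` for a choice of middle objects
`Mᵢ`, `Nᵢ`.  A nullary raw optic is a single morphism `X ⟶ T`. -/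
inductive RawT (C : Type u) [Category.{v} C] [Monoid C] [SMC C] :
    C → List (C × C) → C → Type (max u v)
  | nil {X T : C} (f : X ⟶ T) : RawT C X [] T
  | cons {X T A B : C} {l : List (C × C)} (M N : C) (f : X ⟶ M * A * N)
      (rest : RawT C (M * B * N) l T) : RawT C X ((A, B) :: l) T

namespace RawT

variable {C : Type u} [Category.{v} C] [Monoid C] [SMC C]

def castL {X T : C} {l l' : List (C × C)} (h : l = l') (r : RawT C X l T) :
    RawT C X l' T := by subst h; exact r

def castSrc {X X' T : C} {l : List (C × C)} (h : X = X') (r : RawT C X l T) :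
    RawT C X' l T := by subst h; exact r

/-- Whiskering a raw optic on both sides by objects `M`, `N`. -/
def whisk (M N : C) : ∀ {X T : C} {l : List (C × C)},
    RawT C X l T → RawT C (M * X * N) l (M * T * N)
  | _, _, _, .nil f => .nil (SMC.tens (SMC.tens (𝟙 M) f) (𝟙 N))
  | _, _, _, .cons (A := A) (B := B) M' N' f rest =>
      .cons (M * M') (N' * N)
        (SMC.tens (SMC.tens (𝟙 M) f) (𝟙 N) ≫ eqToHom (by simp [mul_assoc]))
        ((whisk M N rest).castSrc (by simp [mul_assoc]))

/-- Precompose a raw optic with a morphism. -/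
def precomp {W X T : C} {l : List (C × C)} (e : W ⟶ X) :
    RawT C X l T → RawT C W l T
  | .nil f => .nil (e ≫ f)
  | .cons M N f rest => .cons M N (e ≫ f) rest

/-- Concatenation of raw optics. -/
def append : ∀ {X T U : C} {l l' : List (C × C)},
    RawT C X l T → RawT C T l' U → RawT C X (l ++ l') U
  | _, _, _, _, _, .nil f, s => s.precomp f
  | _, _, _, _, _, .cons M N f rest, s => .cons M N f (rest.append s)

/-- Composition of raw optics: substitution of a raw optic `G` into the hole of `F`
in position `l₁.length`, whiskering the components of `G` by the middle objects. -/
def subst : ∀ (l₁ : List (C × C)) {l₂ : List (C × C)} {X T A B : C} {l' : List (C × C)},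
    RawT C X (l₁ ++ (A, B) :: l₂) T → RawT C A l' B → RawT C X (l₁ ++ l' ++ l₂) T
  | [], _, _, _, _, _, _, F, G =>
      match F with
      | .cons M N f rest => ((whisk M N G).append rest).precomp f
  | _ :: l₁, _, _, _, _, _, _, F, G =>
      match F with
      | .cons M N f rest => .cons M N f (subst l₁ rest G)

/-- The identity raw optic on `⟨A|B⟩`. -/
def idRaw (A B : C) : RawT C A [(A, B)] B :=
  .cons 1 1 (eqToHom (by simp)) (.nil (eqToHom (by simp)))

end RawT

/-- Diagram contexts over a strict monoidal category `C`: formal terms built from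
morphisms of `C`, named typed holes, sequential and parallel composition. -/
inductive CTm (C : Type u) [Category.{v} C] [Monoid C] [SMC C] : C → C → Type (max u v)
  | of {X Y : C} (f : X ⟶ Y) : CTm C X Y
  | hole (n : ℕ) (A B : C) : CTm C A B
  | seq {X Y Z : C} : CTm C X Y → CTm C Y Z → CTm C X Z
  | par {X Y X' Y' : C} : CTm C X Y → CTm C X' Y' → CTm C (X * X') (Y * Y')

namespace CTm

variable {C : Type u} [Category.{v} C] [Monoid C] [SMC C]

def castc {X X' Y Y' : C} (h1 : X = X') (h2 : Y = Y') (t : CTm C X Y) : CTm C X' Y' := by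
  subst h1; subst h2; exact t

/-- Renaming of holes. -/
def rename (ρ : ℕ → ℕ) : ∀ {X Y : C}, CTm C X Y → CTm C X Y
  | _, _, .of f => .of f
  | _, _, .hole n A B => .hole (ρ n) A B
  | _, _, .seq a b => .seq (a.rename ρ) (b.rename ρ)
  | _, _, .par a b => .par (a.rename ρ) (b.rename ρ)

/-- The list of (named, typed) holes occurring in a diagram context, in order. -/
def holesOf : ∀ {X Y : C}, CTm C X Y → List (ℕ × C × C)
  | _, _, .of _ => []
  | _, _, .hole n A B => [(n, A, B)]
  | _, _, .seq a b => a.holesOf ++ b.holesOf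
  | _, _, .par a b => a.holesOf ++ b.holesOf

/-- Filling the holes named `n` of type `⟨A|B⟩` with a diagram context `u`. -/
def fill [DecidableEq C] (n : ℕ) {A B : C} (u : CTm C A B) :
    ∀ {X Y : C}, CTm C X Y → CTm C X Y
  | _, _, .of f => .of f
  | _, _, .hole m A' B' =>
      if h : m = n ∧ A = A' ∧ B = B' then u.castc h.2.1 h.2.2 else .hole m A' B'
  | _, _, .seq a b => .seq (fill n u a) (fill n u b)
  | _, _, .par a b => .par (fill n u a) (fill n u b)

/-- Evaluation of a hole-free diagram context as a morphism of `C`. -/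
def evalO : ∀ {X Y : C}, CTm C X Y → Option (X ⟶ Y)
  | _, _, .of f => some f
  | _, _, .hole _ _ _ => none
  | _, _, .seq a b => do pure ((← a.evalO) ≫ (← b.evalO))
  | _, _, .par a b => do pure (SMC.tens (← a.evalO) (← b.evalO))

end CTm

/-- Equality of diagram contexts over a strict monoidal category: the congruence
generated by the strict monoidal equations together with the identification of formal
composites of morphisms of `C` with actual composites in `C`. -/
inductive CTmEq (C : Type u) [Category.{v} C] [Monoid C] [SMC C] :
    ∀ {X Y : C}, CTm C X Y → CTm C X Y → Prop
  | refl {X Y} (t : CTm C X Y) : CTmEq C t t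
  | symm {X Y} {t u : CTm C X Y} : CTmEq C t u → CTmEq C u t
  | trans {X Y} {t u v : CTm C X Y} : CTmEq C t u → CTmEq C u v → CTmEq C t v
  | seq_congr {X Y Z} {t t' : CTm C X Y} {u u' : CTm C Y Z} :
      CTmEq C t t' → CTmEq C u u' → CTmEq C (t.seq u) (t'.seq u')
  | par_congr {X Y X' Y'} {t t' : CTm C X Y} {u u' : CTm C X' Y'} :
      CTmEq C t t' → CTmEq C u u' → CTmEq C (t.par u) (t'.par u')
  | of_comp {X Y Z} (f : X ⟶ Y) (g : Y ⟶ Z) :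
      CTmEq C (.of (f ≫ g)) ((CTm.of f).seq (.of g))
  | of_tens {X Y X' Y'} (f : X ⟶ Y) (g : X' ⟶ Y') :
      CTmEq C (.of (SMC.tens f g)) ((CTm.of f).par (.of g))
  | seq_assoc {W X Y Z} (t₁ : CTm C W X) (t₂ : CTm C X Y) (t₃ : CTm C Y Z) :
      CTmEq C ((t₁.seq t₂).seq t₃) (t₁.seq (t₂.seq t₃))
  | seq_id_right {X Y} (t : CTm C X Y) : CTmEq C (t.seq (.of (𝟙 Y))) t
  | seq_id_left {X Y} (t : CTm C X Y) : CTmEq C ((CTm.of (𝟙 X)).seq t) t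
  | par_assoc {X₁ Y₁ X₂ Y₂ X₃ Y₃} (t₁ : CTm C X₁ Y₁) (t₂ : CTm C X₂ Y₂) (t₃ : CTm C X₃ Y₃) :
      CTmEq C (((t₁.par t₂).par t₃).castc (mul_assoc X₁ X₂ X₃) (mul_assoc Y₁ Y₂ Y₃))
        (t₁.par (t₂.par t₃))
  | par_one_left {X Y} (t : CTm C X Y) :
      CTmEq C (((CTm.of (𝟙 (1 : C))).par t).castc (one_mul X) (one_mul Y)) t
  | par_one_right {X Y} (t : CTm C X Y) :
      CTmEq C ((t.par (.of (𝟙 (1 : C)))).castc (mul_one X) (mul_one Y)) t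
  | interchange {X Y Z X' Y' Z'} (t₁ : CTm C X Y) (t₂ : CTm C Y Z)
      (t₃ : CTm C X' Y') (t₄ : CTm C Y' Z') :
      CTmEq C ((t₁.seq t₂).par (t₃.seq t₄)) ((t₁.par t₃).seq (t₂.par t₄))
  | cast_eq {X X' Y Y'} (h1 : X = X') (h2 : Y = Y') (t : CTm C X Y) :
      CTmEq C (t.castc h1 h2) ((CTm.of (CategoryTheory.eqToHom h1.symm)).seq
        (t.seq (.of (CategoryTheory.eqToHom h2))))

/-- Gluing a raw optic into a diagram context, numbering its holes `k, k+1, …`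
from left to right. -/
def RawT.glue {C : Type u} [Category.{v} C] [Monoid C] [SMC C] :
    ∀ {X T : C} {l : List (C × C)}, ℕ → RawT C X l T → CTm C X T
  | _, _, _, _, .nil f => .of f
  | _, _, _, k, .cons (A := A) (B := B) M N f rest =>
      (CTm.of f).seq
        ((((CTm.of (𝟙 M)).par (.hole k A B)).par (.of (𝟙 N))).seq (rest.glue (k + 1)))

open CategoryTheory

/-- A context-free monoidal grammar over a strict monoidal category `C`: a finite
multigraph of non-terminals typed by pairs of objects of `C`, each production being
mapped to a diagram context whose holes are exactly the (typed) inputs of the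
production. -/
structure CFG (C : Type u) [Category.{v} C] [Monoid C] [SMC C] where
  V : Type
  finV : Finite V
  ty : V → C × C
  Prd : List V → V → Type
  finP : Finite ((l : List V) × (Y : V) × Prd l Y)
  rule : ∀ {l : List V} {Y : V}, Prd l Y → CTm C (ty Y).1 (ty Y).2
  rule_holes : ∀ {l : List V} {Y : V} (r : Prd l Y),
    (rule r).holesOf.Perm ((List.range l.length).zip (l.map ty))

namespace CFG

variable {C : Type u} [Category.{v} C] [Monoid C] [SMC C]

mutual
/-- Closed derivations of the free multicategory on the multigraph of a grammar. -/
inductive Deriv (𝒢 : CFG C) : 𝒢.V → Type (max u v)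
  | node {l : List 𝒢.V} {Y : 𝒢.V} (r : 𝒢.Prd l Y) (ds : DerivList 𝒢 l) : Deriv 𝒢 Y
inductive DerivList (𝒢 : CFG C) : List 𝒢.V → Type (max u v)
  | nil : DerivList 𝒢 []
  | cons {v : 𝒢.V} {l : List 𝒢.V} : Deriv 𝒢 v → DerivList 𝒢 l → DerivList 𝒢 (v :: l)
end

variable [DecidableEq C]

mutual
/-- The image of a closed derivation under the multifunctor induced by the grammar:
the diagram context obtained by recursively filling the holes of the rules. -/
def evalTm {𝒢 : CFG C} : ∀ {v : 𝒢.V}, Deriv 𝒢 v → CTm C (𝒢.ty v).1 (𝒢.ty v).2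
  | _, .node r ds => fillListFrom 0 ds (𝒢.rule r)
def fillListFrom {𝒢 : CFG C} {X Y : C} :
    ∀ {l : List 𝒢.V}, ℕ → DerivList 𝒢 l → CTm C X Y → CTm C X Y
  | _, _, .nil, t => t
  | _, k, .cons d ds, t => fillListFrom (k + 1) ds (CTm.fill k (evalTm d) t)
end

/-- The language of a context-free monoidal grammar at a start sort. -/
def lang (𝒢 : CFG C) (S : 𝒢.V) : Set ((𝒢.ty S).1 ⟶ (𝒢.ty S).2) :=
  {f | ∃ d : Deriv 𝒢 S, (evalTm d).evalO = some f}

/-- The language, transported along an identification of the type of the start sort. -/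
def langAt (𝒢 : CFG C) (S : 𝒢.V) {X Y : C} (h : 𝒢.ty S = (X, Y)) : Set (X ⟶ Y) :=
  {f | ∃ g ∈ 𝒢.lang S,
    f = eqToHom (congrArg Prod.fst h).symm ≫ g ≫ eqToHom (congrArg Prod.snd h)}

end CFG

section UnionConstruction

open CategoryTheory

variable {C : Type u} [Category.{v} C] [Monoid C] [SMC C]
variable (𝒢₁ 𝒢₂ : CFG C) (S₁ : 𝒢₁.V) (S₂ : 𝒢₂.V) (X Y : C)

/-- Productions of the union grammar. -/
inductive UPrd : List (Option (𝒢₁.V ⊕ 𝒢₂.V)) → Option (𝒢₁.V ⊕ 𝒢₂.V) → Type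
  | inl {l w} (r : 𝒢₁.Prd l w) :
      UPrd (l.map fun v => some (Sum.inl v)) (some (Sum.inl w))
  | inr {l w} (r : 𝒢₂.Prd l w) :
      UPrd (l.map fun v => some (Sum.inr v)) (some (Sum.inr w))
  | start1 : UPrd [some (Sum.inl S₁)] none
  | start2 : UPrd [some (Sum.inr S₂)] none

/-- Typing of the union grammar's sorts. -/
@[reducible]
def uty : Option (𝒢₁.V ⊕ 𝒢₂.V) → C × C
  | none => (X, Y)
  | some (Sum.inl w) => 𝒢₁.ty w
  | some (Sum.inr w) => 𝒢₂.ty w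

/-- Rules of the union grammar. -/
def urule : ∀ {l v}, UPrd 𝒢₁ 𝒢₂ S₁ S₂ l v →
    CTm C (uty 𝒢₁ 𝒢₂ X Y v).1 (uty 𝒢₁ 𝒢₂ X Y v).2
  | _, _, .inl r => 𝒢₁.rule r
  | _, _, .inr r => 𝒢₂.rule r
  | _, _, .start1 => .hole 0 X Y
  | _, _, .start2 => .hole 0 X Y

/-- The union grammar. -/
@[reducible]
def UG (h₁ : 𝒢₁.ty S₁ = (X, Y)) (h₂ : 𝒢₂.ty S₂ = (X, Y)) : CFG C where
  V := Option (𝒢₁.V ⊕ 𝒢₂.V)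
  finV := by
    haveI := 𝒢₁.finV; haveI := 𝒢₂.finV
    exact Finite.of_equiv _ (Equiv.optionEquivSumPUnit.{0,0} (𝒢₁.V ⊕ 𝒢₂.V)).symm
  ty := uty 𝒢₁ 𝒢₂ X Y
  Prd := UPrd 𝒢₁ 𝒢₂ S₁ S₂
  finP := by
    have := 𝒢₁.finP; have := 𝒢₂.finP
    have hinj : Function.LeftInverse
        (fun y : ((Σ l, Σ w, 𝒢₁.Prd l w) ⊕ (Σ l, Σ w, 𝒢₂.Prd l w)) ⊕ Bool =>
          (match y with
            | .inl (.inl ⟨_, _, r⟩) => ⟨_, _, UPrd.inl r⟩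
            | .inl (.inr ⟨_, _, r⟩) => ⟨_, _, UPrd.inr r⟩
            | .inr true => ⟨_, _, UPrd.start1 (S₂ := S₂)⟩
            | .inr false => ⟨_, _, UPrd.start2 (S₁ := S₁)⟩ :
              (l : List (Option (𝒢₁.V ⊕ 𝒢₂.V))) × (v : Option (𝒢₁.V ⊕ 𝒢₂.V)) ×
                UPrd 𝒢₁ 𝒢₂ S₁ S₂ l v))
        (fun x : (l : List (Option (𝒢₁.V ⊕ 𝒢₂.V))) × (v : Option (𝒢₁.V ⊕ 𝒢₂.V)) ×
            UPrd 𝒢₁ 𝒢₂ S₁ S₂ l v =>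
          match x with
          | ⟨_, _, .inl r⟩ => .inl (.inl ⟨_, _, r⟩)
          | ⟨_, _, .inr r⟩ => .inl (.inr ⟨_, _, r⟩)
          | ⟨_, _, .start1⟩ => .inr true
          | ⟨_, _, .start2⟩ => .inr false) := by
      rintro ⟨l, v, p⟩
      cases p <;> rfl
    exact Finite.of_injective _ hinj.injective
  rule := urule 𝒢₁ 𝒢₂ S₁ S₂ X Y
  rule_holes := by
    intro l v r
    cases r with
    | inl r =>
        have h := 𝒢₁.rule_holes r
        simpa only [urule, uty, List.length_map, List.map_map, Function.comp_def] using h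
    | inr r =>
        have h := 𝒢₂.rule_holes r
        simpa only [urule, uty, List.length_map, List.map_map, Function.comp_def] using h
    | start1 =>
        have hty : uty 𝒢₁ 𝒢₂ X Y (some (Sum.inl S₁)) = (X, Y) := h₁
        simp only [urule, CTm.holesOf, List.map_cons, List.map_nil, hty,
          List.range_succ, List.range_zero, List.zip_cons_cons, List.zip_nil_right]
        exact List.Perm.refl _
    | start2 =>
        have hty : uty 𝒢₁ 𝒢₂ X Y (some (Sum.inr S₂)) = (X, Y) := h₂
        simp only [urule, CTm.holesOf, List.map_cons, List.map_nil, hty,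
          List.range_succ, List.range_zero, List.zip_cons_cons, List.zip_nil_right]
        exact List.Perm.refl _

variable (h₁ : 𝒢₁.ty S₁ = (X, Y)) (h₂ : 𝒢₂.ty S₂ = (X, Y)) [DecidableEq C]

mutual
def emb1 : ∀ {w : 𝒢₁.V}, CFG.Deriv 𝒢₁ w →
    CFG.Deriv (UG 𝒢₁ 𝒢₂ S₁ S₂ X Y h₁ h₂) (some (Sum.inl w))
  | _, .node r ds => .node (UPrd.inl r) (emb1List ds)
def emb1List : ∀ {l : List 𝒢₁.V}, CFG.DerivList 𝒢₁ l →
    CFG.DerivList (UG 𝒢₁ 𝒢₂ S₁ S₂ X Y h₁ h₂) (l.map fun v => some (Sum.inl v))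
  | _, .nil => .nil
  | _, .cons d ds => .cons (emb1 d) (emb1List ds)
end

mutual
theorem emb1_eval : ∀ {w : 𝒢₁.V} (d : CFG.Deriv 𝒢₁ w),
    CFG.evalTm (emb1 𝒢₁ 𝒢₂ S₁ S₂ X Y h₁ h₂ d) = CFG.evalTm d
  | _, .node r ds => by
      show CFG.fillListFrom 0 (emb1List 𝒢₁ 𝒢₂ S₁ S₂ X Y h₁ h₂ ds) (𝒢₁.rule r)
          = CFG.fillListFrom 0 ds (𝒢₁.rule r)
      exact emb1_fill ds 0 _
theorem emb1_fill : ∀ {l : List 𝒢₁.V} (ds : CFG.DerivList 𝒢₁ l) {A B : C} (k : ℕ)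
    (t : CTm C A B),
    CFG.fillListFrom k (emb1List 𝒢₁ 𝒢₂ S₁ S₂ X Y h₁ h₂ ds) t = CFG.fillListFrom k ds t
  | _, .nil, _, _, _, _ => rfl
  | _, .cons d ds, _, _, k, t => by
      show CFG.fillListFrom (k + 1) (emb1List 𝒢₁ 𝒢₂ S₁ S₂ X Y h₁ h₂ ds)
          (CTm.fill k (CFG.evalTm (emb1 𝒢₁ 𝒢₂ S₁ S₂ X Y h₁ h₂ d)) t)
        = CFG.fillListFrom (k + 1) ds (CTm.fill k (CFG.evalTm d) t)
      rw [emb1_eval d]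
      exact emb1_fill ds (k + 1) _
end

mutual
def proj1 : ∀ {w : 𝒢₁.V},
    CFG.Deriv (UG 𝒢₁ 𝒢₂ S₁ S₂ X Y h₁ h₂) (some (Sum.inl w)) → CFG.Deriv 𝒢₁ w
  | _, .node (.inl r) ds => .node r (proj1List ds)
  termination_by _ d => sizeOf d
def proj1List : ∀ {l : List 𝒢₁.V},
    CFG.DerivList (UG 𝒢₁ 𝒢₂ S₁ S₂ X Y h₁ h₂) (l.map fun v => some (Sum.inl v)) →
      CFG.DerivList 𝒢₁ l
  | [], _ => .nil
  | _ :: _, .cons d ds => .cons (proj1 d) (proj1List ds)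
  termination_by _ ds => sizeOf ds
  decreasing_by all_goals (simp_wf; rw [CFG.DerivList.cons.sizeOf_spec]; omega)
end

mutual
theorem proj1_eval : ∀ {w : 𝒢₁.V}
    (d : CFG.Deriv (UG 𝒢₁ 𝒢₂ S₁ S₂ X Y h₁ h₂) (some (Sum.inl w))),
    CFG.evalTm (proj1 𝒢₁ 𝒢₂ S₁ S₂ X Y h₁ h₂ d) = CFG.evalTm d
  | _, .node (.inl r) ds => by
      rw [proj1]; simp only [CFG.evalTm]
      exact proj1_fill ds 0 _
  termination_by _ d => sizeOf d
theorem proj1_fill : ∀ {l : List 𝒢₁.V}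
    (ds : CFG.DerivList (UG 𝒢₁ 𝒢₂ S₁ S₂ X Y h₁ h₂) (l.map fun v => some (Sum.inl v)))
    {A B : C} (k : ℕ) (t : CTm C A B),
    CFG.fillListFrom k (proj1List 𝒢₁ 𝒢₂ S₁ S₂ X Y h₁ h₂ ds) t = CFG.fillListFrom k ds t
  | [], .nil, _, _, _, _ => by rw [proj1List]; rfl
  | _ :: _, .cons d ds, _, _, k, t => by
      rw [proj1List]; simp only [CFG.fillListFrom]
      rw [proj1_eval d]
      exact proj1_fill ds (k + 1) _
  termination_by _ ds _ _ _ _ => sizeOf ds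
  decreasing_by all_goals (simp_wf; rw [CFG.DerivList.cons.sizeOf_spec]; omega)
end

mutual
def emb2 : ∀ {w : 𝒢₂.V}, CFG.Deriv 𝒢₂ w →
    CFG.Deriv (UG 𝒢₁ 𝒢₂ S₁ S₂ X Y h₁ h₂) (some (Sum.inr w))
  | _, .node r ds => .node (UPrd.inr r) (emb2List ds)
def emb2List : ∀ {l : List 𝒢₂.V}, CFG.DerivList 𝒢₂ l →
    CFG.DerivList (UG 𝒢₁ 𝒢₂ S₁ S₂ X Y h₁ h₂) (l.map fun v => some (Sum.inr v))
  | _, .nil => .nil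
  | _, .cons d ds => .cons (emb2 d) (emb2List ds)
end

mutual
theorem emb2_eval : ∀ {w : 𝒢₂.V} (d : CFG.Deriv 𝒢₂ w),
    CFG.evalTm (emb2 𝒢₁ 𝒢₂ S₁ S₂ X Y h₁ h₂ d) = CFG.evalTm d
  | _, .node r ds => by
      show CFG.fillListFrom 0 (emb2List 𝒢₁ 𝒢₂ S₁ S₂ X Y h₁ h₂ ds) (𝒢₂.rule r)
          = CFG.fillListFrom 0 ds (𝒢₂.rule r)
      exact emb2_fill ds 0 _
theorem emb2_fill : ∀ {l : List 𝒢₂.V} (ds : CFG.DerivList 𝒢₂ l) {A B : C} (k : ℕ)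
    (t : CTm C A B),
    CFG.fillListFrom k (emb2List 𝒢₁ 𝒢₂ S₁ S₂ X Y h₁ h₂ ds) t = CFG.fillListFrom k ds t
  | _, .nil, _, _, _, _ => rfl
  | _, .cons d ds, _, _, k, t => by
      show CFG.fillListFrom (k + 1) (emb2List 𝒢₁ 𝒢₂ S₁ S₂ X Y h₁ h₂ ds)
          (CTm.fill k (CFG.evalTm (emb2 𝒢₁ 𝒢₂ S₁ S₂ X Y h₁ h₂ d)) t)
        = CFG.fillListFrom (k + 1) ds (CTm.fill k (CFG.evalTm d) t)
      rw [emb2_eval d]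
      exact emb2_fill ds (k + 1) _
end

mutual
def proj2 : ∀ {w : 𝒢₂.V},
    CFG.Deriv (UG 𝒢₁ 𝒢₂ S₁ S₂ X Y h₁ h₂) (some (Sum.inr w)) → CFG.Deriv 𝒢₂ w
  | _, .node (.inr r) ds => .node r (proj2List ds)
  termination_by _ d => sizeOf d
def proj2List : ∀ {l : List 𝒢₂.V},
    CFG.DerivList (UG 𝒢₁ 𝒢₂ S₁ S₂ X Y h₁ h₂) (l.map fun v => some (Sum.inr v)) →
      CFG.DerivList 𝒢₂ l
  | [], _ => .nil
  | _ :: _, .cons d ds => .cons (proj2 d) (proj2List ds)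
  termination_by _ ds => sizeOf ds
  decreasing_by all_goals (simp_wf; rw [CFG.DerivList.cons.sizeOf_spec]; omega)
end

mutual
theorem proj2_eval : ∀ {w : 𝒢₂.V}
    (d : CFG.Deriv (UG 𝒢₁ 𝒢₂ S₁ S₂ X Y h₁ h₂) (some (Sum.inr w))),
    CFG.evalTm (proj2 𝒢₁ 𝒢₂ S₁ S₂ X Y h₁ h₂ d) = CFG.evalTm d
  | _, .node (.inr r) ds => by
      rw [proj2]; simp only [CFG.evalTm]
      exact proj2_fill ds 0 _
  termination_by _ d => sizeOf d
theorem proj2_fill : ∀ {l : List 𝒢₂.V}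
    (ds : CFG.DerivList (UG 𝒢₁ 𝒢₂ S₁ S₂ X Y h₁ h₂) (l.map fun v => some (Sum.inr v)))
    {A B : C} (k : ℕ) (t : CTm C A B),
    CFG.fillListFrom k (proj2List 𝒢₁ 𝒢₂ S₁ S₂ X Y h₁ h₂ ds) t = CFG.fillListFrom k ds t
  | [], .nil, _, _, _, _ => by rw [proj2List]; rfl
  | _ :: _, .cons d ds, _, _, k, t => by
      rw [proj2List]; simp only [CFG.fillListFrom]
      rw [proj2_eval d]
      exact proj2_fill ds (k + 1) _
  termination_by _ ds _ _ _ _ => sizeOf ds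
  decreasing_by all_goals (simp_wf; rw [CFG.DerivList.cons.sizeOf_spec]; omega)
end


theorem evalO_castc {A A' B B' : C} (hA : A = A') (hB : B = B') (t : CTm C A B) :
    (t.castc hA hB).evalO = t.evalO.map fun g => eqToHom hA.symm ≫ g ≫ eqToHom hB := by
  subst hA; subst hB
  cases h : t.evalO <;> simp [CTm.castc, h]

theorem evalTm_start1
    (d : CFG.Deriv (UG 𝒢₁ 𝒢₂ S₁ S₂ X Y h₁ h₂) (some (Sum.inl S₁))) :
    CFG.evalTm (𝒢 := UG 𝒢₁ 𝒢₂ S₁ S₂ X Y h₁ h₂) (v := none)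
      (CFG.Deriv.node UPrd.start1 (CFG.DerivList.cons d CFG.DerivList.nil)) =
      (CFG.evalTm d).castc (congrArg Prod.fst h₁) (congrArg Prod.snd h₁) := by
  simp only [CFG.evalTm, CFG.fillListFrom]
  show CTm.fill 0 (CFG.evalTm d) (CTm.hole 0 X Y) = _
  simp only [CTm.fill]
  exact dif_pos ⟨trivial, congrArg Prod.fst h₁, congrArg Prod.snd h₁⟩

theorem evalTm_start2
    (d : CFG.Deriv (UG 𝒢₁ 𝒢₂ S₁ S₂ X Y h₁ h₂) (some (Sum.inr S₂))) :
    CFG.evalTm (𝒢 := UG 𝒢₁ 𝒢₂ S₁ S₂ X Y h₁ h₂) (v := none)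
      (CFG.Deriv.node UPrd.start2 (CFG.DerivList.cons d CFG.DerivList.nil)) =
      (CFG.evalTm d).castc (congrArg Prod.fst h₂) (congrArg Prod.snd h₂) := by
  simp only [CFG.evalTm, CFG.fillListFrom]
  show CTm.fill 0 (CFG.evalTm d) (CTm.hole 0 X Y) = _
  simp only [CTm.fill]
  exact dif_pos ⟨trivial, congrArg Prod.fst h₂, congrArg Prod.snd h₂⟩

end UnionConstruction


/-- Context-free monoidal languages with start symbols of the same type `⟨X|Y⟩`
are closed under union. -/
theorem cf_union_closed (C : Type u) [Category.{v} C] [Monoid C] [SMC C] [DecidableEq C]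
    (X Y : C) (𝒢₁ 𝒢₂ : CFG C) (S₁ : 𝒢₁.V) (S₂ : 𝒢₂.V)
    (h₁ : 𝒢₁.ty S₁ = (X, Y)) (h₂ : 𝒢₂.ty S₂ = (X, Y)) :
    ∃ (𝒢 : CFG C) (S : 𝒢.V) (h : 𝒢.ty S = (X, Y)),
      𝒢.langAt S h = 𝒢₁.langAt S₁ h₁ ∪ 𝒢₂.langAt S₂ h₂ := by
  refine ⟨UG 𝒢₁ 𝒢₂ S₁ S₂ X Y h₁ h₂, none, rfl, ?_⟩
  ext f
  simp only [CFG.langAt, CFG.lang, Set.mem_setOf_eq, Set.mem_union, eqToHom_refl,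
    Category.comp_id, Category.id_comp]
  constructor
  · rintro ⟨g, ⟨d, hd⟩, hfg⟩
    match d, hd with
    | .node p ds, hd =>
      cases p with
      | start1 =>
        match ds, hd with
        | .cons d₁ .nil, hd =>
          rw [evalTm_start1, evalO_castc] at hd
          obtain ⟨g', hg', hfg'⟩ := Option.map_eq_some_iff.mp hd
          left
          exact ⟨g', ⟨proj1 𝒢₁ 𝒢₂ S₁ S₂ X Y h₁ h₂ d₁, by rw [proj1_eval]; exact hg'⟩,
            by rw [hfg, ← hfg']⟩
      | start2 =>
        match ds, hd with
        | .cons d₁ .nil, hd =>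
          rw [evalTm_start2, evalO_castc] at hd
          obtain ⟨g', hg', hfg'⟩ := Option.map_eq_some_iff.mp hd
          right
          exact ⟨g', ⟨proj2 𝒢₁ 𝒢₂ S₁ S₂ X Y h₁ h₂ d₁, by rw [proj2_eval]; exact hg'⟩,
            by rw [hfg, ← hfg']⟩
  · rintro (⟨g, ⟨d, hd⟩, hfg⟩ | ⟨g, ⟨d, hd⟩, hfg⟩)
    · refine ⟨f, ⟨CFG.Deriv.node (UPrd.start1)
        (CFG.DerivList.cons (emb1 𝒢₁ 𝒢₂ S₁ S₂ X Y h₁ h₂ d) CFG.DerivList.nil), ?_⟩, rfl⟩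
      rw [evalTm_start1, evalO_castc, emb1_eval, hd, Option.map_some, ← hfg]
    · refine ⟨f, ⟨CFG.Deriv.node (UPrd.start2)
        (CFG.DerivList.cons (emb2 𝒢₁ 𝒢₂ S₁ S₂ X Y h₁ h₂ d) CFG.DerivList.nil), ?_⟩, rfl⟩
      rw [evalTm_start2, evalO_castc, emb2_eval, hd, Option.map_some, ← hfg]
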